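/- Suppose R : X → PMF(Y) is a deletion ε-DP local randomizer with reference distribution ρ, t-samplable via R_∅ : {0,1}^t → Y, let ℓ ∈ ℕ and G : {0,1}^ℓ → {0,1}^t, and suppose G β-fools the density tests of R with 0 ≤ β < 1/(2·e^ε). Then R[G] is a deletion (ε + 2·e^ε·β)-DP local randomizer with reference the uniform distribution on {0,1}^ℓ: for every x ∈ X and every s ∈ {0,1}^ℓ, e^{-(ε + 2·e^ε·β)} · 2^{-ℓ} ≤ R[G](x)(s) ≤ e^{ε + 2·e^ε·β} · 2^{-ℓ}. -/

import Mathlib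

open Finset

-- auxiliary: layer-cake for single threshold function
lemma gaux_antitone (c : ℝ) : Antitone (fun θ : ℝ => if θ ≤ c then (1:ℝ) else 0) := by
  intro a b hab
  by_cases hb : b ≤ c
  · simp [hb, le_trans hab hb]
  · simp only [hb, if_false]
    by_cases ha : a ≤ c <;> simp [ha]

lemma gaux_integral (c M : ℝ) (hc0 : 0 ≤ c) (hcM : c ≤ M) :
    ∫ θ in (0:ℝ)..M, (if θ ≤ c then (1:ℝ) else 0) = c := by
  have h0M : (0:ℝ) ≤ M := le_trans hc0 hcM
  rw [intervalIntegral.integral_of_le h0M]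
  have heq : (fun θ : ℝ => if θ ≤ c then (1:ℝ) else 0)
      = Set.indicator (Set.Iic c) (fun _ => (1:ℝ)) := by
    funext θ; simp [Set.indicator, Set.mem_Iic]
  rw [heq, MeasureTheory.setIntegral_indicator measurableSet_Iic]
  have : Set.Ioc 0 M ∩ Set.Iic c = Set.Ioc 0 c := by
    rw [Set.Ioc_inter_Iic, min_eq_right hcM]
  rw [this]
  simp [Real.volume_Ioc, ENNReal.toReal_ofReal hc0]
  exact hc0

/-- **Compression of a deletion ε-DP local randomizer with a PRG that fools density tests.**
If `R : X → PMF(Y)` is deletion ε-DP with reference `ρ`, `t`-samplable via `R₀`, and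
`G` β-fools the density tests of `R` with `0 ≤ β < 1/(2e^ε)`, then the compressed randomizer
`R[G](x)(s) = π_x(R₀(G s)) / ∑_{s'} π_x(R₀(G s'))` is deletion `(ε + 2e^ε β)`-DP with
reference the uniform distribution on `{0,1}^ℓ`. -/
theorem stmt_0 {X Y : Type*} [Fintype X] [Fintype Y] [Nonempty X] [Nonempty Y] [DecidableEq Y]
    (R : X → Y → ℝ) (ρ : Y → ℝ) (ε β : ℝ) (t ℓ : ℕ)
    (R₀ : (Fin t → Bool) → Y) (G : (Fin ℓ → Bool) → Fin t → Bool)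
    (hRpmf : ∀ x, (∀ y, 0 ≤ R x y) ∧ ∑ y, R x y = 1)
    (hρpmf : (∀ y, 0 ≤ ρ y) ∧ ∑ y, ρ y = 1)
    (hε : 0 < ε)
    (hDP : ∀ x y, Real.exp (-ε) * ρ y ≤ R x y ∧ R x y ≤ Real.exp ε * ρ y)
    (hsamp : ∀ y, ((univ.filter fun r : Fin t → Bool => R₀ r = y).card : ℝ) / 2 ^ t = ρ y)
    (hβ0 : 0 ≤ β) (hβ : β < 1 / (2 * Real.exp ε))
    (hfool : ∀ x : X, ∀ θ ∈ Set.Icc (0 : ℝ) (Real.exp ε),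
      |((univ.filter fun s : Fin ℓ → Bool =>
            θ ≤ R x (R₀ (G s)) / ρ (R₀ (G s))).card : ℝ) / 2 ^ ℓ -
        ((univ.filter fun r : Fin t → Bool =>
            θ ≤ R x (R₀ r) / ρ (R₀ r)).card : ℝ) / 2 ^ t| ≤ β) :
    ∀ (x : X) (s : Fin ℓ → Bool),
      Real.exp (-(ε + 2 * Real.exp ε * β)) * ((2 : ℝ) ^ ℓ)⁻¹ ≤
        (R x (R₀ (G s)) / ρ (R₀ (G s))) /
          ∑ s' : Fin ℓ → Bool, R x (R₀ (G s')) / ρ (R₀ (G s')) ∧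
      (R x (R₀ (G s)) / ρ (R₀ (G s))) /
          ∑ s' : Fin ℓ → Bool, R x (R₀ (G s')) / ρ (R₀ (G s')) ≤
        Real.exp (ε + 2 * Real.exp ε * β) * ((2 : ℝ) ^ ℓ)⁻¹ := by
  intro x s
  have hMpos : (0:ℝ) < Real.exp ε := Real.exp_pos ε
  have hmpos : (0:ℝ) < Real.exp (-ε) := Real.exp_pos _
  -- ρ is positive on the range of R₀
  have hρpos : ∀ r : Fin t → Bool, 0 < ρ (R₀ r) := by
    intro r
    rw [← hsamp (R₀ r)]
    have hcard : 0 < (univ.filter fun r' : Fin t → Bool => R₀ r' = R₀ r).card :=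
      Finset.card_pos.2 ⟨r, Finset.mem_filter.2 ⟨Finset.mem_univ r, rfl⟩⟩
    have : (0:ℝ) < (univ.filter fun r' : Fin t → Bool => R₀ r' = R₀ r).card := by
      exact_mod_cast hcard
    positivity
  -- density ratio bounds
  have hd : ∀ r : Fin t → Bool, Real.exp (-ε) ≤ R x (R₀ r) / ρ (R₀ r) ∧
      R x (R₀ r) / ρ (R₀ r) ≤ Real.exp ε := by
    intro r
    refine ⟨(le_div_iff₀ (hρpos r)).2 ?_, (div_le_iff₀ (hρpos r)).2 ?_⟩
    · exact (hDP x (R₀ r)).1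
    · exact (hDP x (R₀ r)).2
  -- sum over all seeds r equals 2^t
  have hfiber : ∀ y : Y, ((univ.filter fun r : Fin t → Bool => R₀ r = y).card : ℝ)
      = 2 ^ t * ρ y := by
    intro y
    rw [← hsamp y]
    field_simp
  have hzero : ∀ y : Y, ρ y = 0 → R x y = 0 := by
    intro y hy
    have h2 := (hDP x y).2
    rw [hy, mul_zero] at h2
    exact le_antisymm h2 ((hRpmf x).1 y)
  have hsum_d : ∑ r : Fin t → Bool, R x (R₀ r) / ρ (R₀ r) = 2 ^ t := by
    rw [← Finset.sum_fiberwise' (univ : Finset (Fin t → Bool)) R₀ (fun y => R x y / ρ y)]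
    have hterm : ∀ y : Y,
        ∑ _r ∈ univ.filter (fun r : Fin t → Bool => R₀ r = y), R x y / ρ y
          = 2 ^ t * R x y := by
      intro y
      rw [Finset.sum_const, nsmul_eq_mul, hfiber y]
      by_cases hy : ρ y = 0
      · simp [hy, hzero y hy]
      · field_simp
    rw [Finset.sum_congr rfl fun y _ => hterm y, ← Finset.mul_sum, (hRpmf x).2, mul_one]
  -- integral identities
  have hgint : ∀ c : ℝ, IntervalIntegrable (fun θ => if θ ≤ c then (1:ℝ) else 0)
      MeasureTheory.volume 0 (Real.exp ε) := fun c => (gaux_antitone c).intervalIntegrable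
  have hint1sum : IntervalIntegrable
      (fun θ => ∑ s' : Fin ℓ → Bool,
        if θ ≤ R x (R₀ (G s')) / ρ (R₀ (G s')) then (1:ℝ) else 0)
      MeasureTheory.volume 0 (Real.exp ε) := by
    have h := IntervalIntegrable.sum (μ := MeasureTheory.volume) (a := (0:ℝ))
      (b := Real.exp ε) (univ : Finset (Fin ℓ → Bool))
      (f := fun s' (θ : ℝ) => if θ ≤ R x (R₀ (G s')) / ρ (R₀ (G s')) then (1:ℝ) else 0)
      (fun i _ => hgint _)
    have he : (∑ s' : Fin ℓ → Bool,
        fun (θ : ℝ) => if θ ≤ R x (R₀ (G s')) / ρ (R₀ (G s')) then (1:ℝ) else 0)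
        = fun (θ : ℝ) => ∑ s' : Fin ℓ → Bool,
          if θ ≤ R x (R₀ (G s')) / ρ (R₀ (G s')) then (1:ℝ) else 0 := by
      funext θ
      simp
    rw [he] at h
    exact h
  have hint2sum : IntervalIntegrable
      (fun θ => ∑ r : Fin t → Bool,
        if θ ≤ R x (R₀ r) / ρ (R₀ r) then (1:ℝ) else 0)
      MeasureTheory.volume 0 (Real.exp ε) := by
    have h := IntervalIntegrable.sum (μ := MeasureTheory.volume) (a := (0:ℝ))
      (b := Real.exp ε) (univ : Finset (Fin t → Bool))
      (f := fun r (θ : ℝ) => if θ ≤ R x (R₀ r) / ρ (R₀ r) then (1:ℝ) else 0)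
      (fun i _ => hgint _)
    have he : (∑ r : Fin t → Bool,
        fun (θ : ℝ) => if θ ≤ R x (R₀ r) / ρ (R₀ r) then (1:ℝ) else 0)
        = fun (θ : ℝ) => ∑ r : Fin t → Bool,
          if θ ≤ R x (R₀ r) / ρ (R₀ r) then (1:ℝ) else 0 := by
      funext θ
      simp
    rw [he] at h
    exact h
  have hint1 : ∫ θ in (0:ℝ)..(Real.exp ε),
      (∑ s' : Fin ℓ → Bool, if θ ≤ R x (R₀ (G s')) / ρ (R₀ (G s')) then (1:ℝ) else 0)
      = ∑ s' : Fin ℓ → Bool, R x (R₀ (G s')) / ρ (R₀ (G s')) := by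
    rw [intervalIntegral.integral_finset_sum fun i _ => hgint _]
    exact Finset.sum_congr rfl fun s' _ =>
      gaux_integral _ _ (le_trans hmpos.le (hd (G s')).1) (hd (G s')).2
  have hint2 : ∫ θ in (0:ℝ)..(Real.exp ε),
      (∑ r : Fin t → Bool, if θ ≤ R x (R₀ r) / ρ (R₀ r) then (1:ℝ) else 0)
      = 2 ^ t := by
    rw [intervalIntegral.integral_finset_sum fun i _ => hgint _]
    rw [Finset.sum_congr rfl fun r _ =>
      gaux_integral _ _ (le_trans hmpos.le (hd r).1) (hd r).2]
    exact hsum_d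
  -- the key estimate
  set S := ∑ s' : Fin ℓ → Bool, R x (R₀ (G s')) / ρ (R₀ (G s')) with hSdef
  have key : |S / 2 ^ ℓ - 1| ≤ Real.exp ε * β := by
    have hid : ∫ θ in (0:ℝ)..(Real.exp ε),
        ((∑ s' : Fin ℓ → Bool,
            if θ ≤ R x (R₀ (G s')) / ρ (R₀ (G s')) then (1:ℝ) else 0) / 2 ^ ℓ -
         (∑ r : Fin t → Bool,
            if θ ≤ R x (R₀ r) / ρ (R₀ r) then (1:ℝ) else 0) / 2 ^ t)
        = S / 2 ^ ℓ - 1 := by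
      rw [intervalIntegral.integral_sub (hint1sum.div_const _) (hint2sum.div_const _),
        intervalIntegral.integral_div, intervalIntegral.integral_div, hint1, hint2]
      norm_num
    have hb := intervalIntegral.norm_integral_le_of_norm_le_const
      (a := (0:ℝ)) (b := Real.exp ε) (C := β)
      (f := fun θ =>
        ((∑ s' : Fin ℓ → Bool,
            if θ ≤ R x (R₀ (G s')) / ρ (R₀ (G s')) then (1:ℝ) else 0) / 2 ^ ℓ -
         (∑ r : Fin t → Bool,
            if θ ≤ R x (R₀ r) / ρ (R₀ r) then (1:ℝ) else 0) / 2 ^ t)) ?_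
    · rw [hid] at hb
      rw [Real.norm_eq_abs] at hb
      calc |S / 2 ^ ℓ - 1| ≤ β * |Real.exp ε - 0| := hb
        _ = Real.exp ε * β := by rw [abs_of_pos (by simpa using hMpos)]; ring
    · intro θ hθ
      rw [Set.uIoc_of_le hMpos.le] at hθ
      have hfool' := hfool x θ ⟨hθ.1.le, hθ.2⟩
      rw [Real.norm_eq_abs]
      simpa [Finset.sum_boole] using hfool'
  -- arithmetic conclusion
  set u := Real.exp ε * β with hu
  have hu0 : (0:ℝ) ≤ u := by positivity
  have hu2 : u < 1 / 2 := by
    have h2M : (0:ℝ) < 2 * Real.exp ε := by positivity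
    have := (lt_div_iff₀ h2M).1 hβ
    nlinarith
  have hAbs := abs_le.1 key
  have h2ℓ : (0:ℝ) < 2 ^ ℓ := by positivity
  have hSlo : 2 ^ ℓ * (1 - u) ≤ S := by
    have := hAbs.1
    have h' : 1 - u ≤ S / 2 ^ ℓ := by linarith
    calc 2 ^ ℓ * (1 - u) ≤ 2 ^ ℓ * (S / 2 ^ ℓ) := by
          exact mul_le_mul_of_nonneg_left h' h2ℓ.le
      _ = S := by field_simp
  have hShi : S ≤ 2 ^ ℓ * (1 + u) := by
    have := hAbs.2
    have h' : S / 2 ^ ℓ ≤ 1 + u := by linarith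
    calc S = 2 ^ ℓ * (S / 2 ^ ℓ) := by field_simp
      _ ≤ 2 ^ ℓ * (1 + u) := mul_le_mul_of_nonneg_left h' h2ℓ.le
  have hSpos : 0 < S := lt_of_lt_of_le (by nlinarith) hSlo
  -- exponential comparison lemmas
  have hexp1 : 1 + u ≤ Real.exp (2 * u) := by
    have h1 := Real.add_one_le_exp u
    have h2 : Real.exp u ≤ Real.exp (2 * u) := Real.exp_le_exp.2 (by linarith)
    linarith
  have hexp2 : Real.exp (-(2 * u)) ≤ 1 - u := by
    have h1 : 1 + 2 * u ≤ Real.exp (2 * u) := by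
      have := Real.add_one_le_exp (2 * u); linarith
    have h2pos : (0:ℝ) < 1 + 2 * u := by linarith
    have h3 : Real.exp (-(2 * u)) = (Real.exp (2 * u))⁻¹ := Real.exp_neg _
    have h4 : (Real.exp (2 * u))⁻¹ ≤ (1 + 2 * u)⁻¹ :=
      inv_anti₀ h2pos h1
    have h5 : (1 + 2 * u)⁻¹ ≤ 1 - u := by
      rw [inv_eq_one_div, div_le_iff₀ h2pos]
      nlinarith
    linarith [h3 ▸ le_trans h4 h5]
  have hcs := hd (G s)
  constructor
  · -- lower bound
    have hden : S ≤ 2 ^ ℓ * Real.exp (2 * u) := by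
      calc S ≤ 2 ^ ℓ * (1 + u) := hShi
        _ ≤ 2 ^ ℓ * Real.exp (2 * u) := mul_le_mul_of_nonneg_left hexp1 h2ℓ.le
    have h := div_le_div₀ (le_trans hmpos.le hcs.1) hcs.1 hSpos hden
    refine le_trans (le_of_eq ?_) h
    have e1 : -(ε + 2 * Real.exp ε * β) = (-ε) + (-(2 * u)) := by rw [hu]; ring
    rw [e1, Real.exp_add, Real.exp_neg (2 * u), div_eq_mul_inv, mul_inv]
    ring
  · -- upper bound
    have hden2 : 2 ^ ℓ * Real.exp (-(2 * u)) ≤ S :=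
      le_trans (mul_le_mul_of_nonneg_left hexp2 h2ℓ.le) hSlo
    have hpos2 : (0:ℝ) < 2 ^ ℓ * Real.exp (-(2 * u)) := by positivity
    have h := div_le_div₀ hMpos.le hcs.2 hpos2 hden2
    refine le_trans h (le_of_eq ?_)
    have e2 : ε + 2 * Real.exp ε * β = ε + 2 * u := by rw [hu]; ring
    rw [e2, Real.exp_add, Real.exp_neg (2 * u), div_eq_mul_inv, mul_inv, inv_inv]
    ring
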